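/- Let U be a real random variable with distribution F satisfying E[U] = 0 and E[U²] = 1, let τ > 0, and let λ ↦ p(y; λ) be three times continuously differentiable in λ with derivatives dominated near λ₀ by an F-integrable function so that differentiation under the integral sign is justified, and suppose p(y; λ₀) > 0. Define l(η) = log ∫ p(y; λ₀ + τ √η · u) dF(u) for η > 0. If ∫ u³ dF(u) ≠ 0 and ∇³_λ p(y; λ₀) ≠ 0, then the second derivative l″(η) diverges as η → 0⁺: |∇²_η l(η)| → ∞ as η ↓ 0, so the second-order derivative of the reparameterized log density is unbounded near η = 0. -/

import Mathlib

open MeasureTheory Filter Topology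
open scoped BigOperators ENNReal

noncomputable def GGaux (F : Measure ℝ) (p : ℝ → ℝ) (τ l₀ : ℝ) (k : ℕ) (s : ℝ) : ℝ :=
  ∫ u, u ^ k * iteratedDeriv k p (l₀ + τ * s * u) ∂F

lemma GGaux_meas (F : Measure ℝ) (p : ℝ → ℝ) (τ l₀ : ℝ) (hsmooth : ContDiff ℝ 3 p)
    (k : ℕ) (hk : k ≤ 3) (s : ℝ) :
    AEStronglyMeasurable (fun u : ℝ => u ^ k * iteratedDeriv k p (l₀ + τ * s * u)) F := by
  refine Continuous.aestronglyMeasurable ?_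
  exact (continuous_pow k).mul
    ((hsmooth.continuous_iteratedDeriv k (by exact_mod_cast hk)).comp (by continuity))

lemma GGaux_int (F : Measure ℝ) (p : ℝ → ℝ) (τ l₀ : ℝ) (hsmooth : ContDiff ℝ 3 p)
    (D : ℝ → ℝ) (hD : Integrable D F) (ε : ℝ)
    (hdom : ∀ᵐ u ∂F, ∀ ξ : ℝ, |ξ| < ε → ∀ k ≤ 3,
      |u ^ k * iteratedDeriv k p (l₀ + τ * ξ * u)| ≤ D u)
    (k : ℕ) (hk : k ≤ 3) (s : ℝ) (hs : |s| < ε) :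
    Integrable (fun u : ℝ => u ^ k * iteratedDeriv k p (l₀ + τ * s * u)) F := by
  refine hD.mono (GGaux_meas F p τ l₀ hsmooth k hk s) ?_
  filter_upwards [hdom] with u hu
  exact le_trans (hu s hs k hk) (le_abs_self _)

lemma GGaux_hasDerivAt (F : Measure ℝ) (p : ℝ → ℝ) (τ l₀ : ℝ) (hτ : 0 < τ)
    (hsmooth : ContDiff ℝ 3 p)
    (D : ℝ → ℝ) (hD : Integrable D F) (ε : ℝ)
    (hdom : ∀ᵐ u ∂F, ∀ ξ : ℝ, |ξ| < ε → ∀ k ≤ 3,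
      |u ^ k * iteratedDeriv k p (l₀ + τ * ξ * u)| ≤ D u)
    (k : ℕ) (hk : k < 3) (s₀ : ℝ) (hs₀ : |s₀| < ε) :
    HasDerivAt (GGaux F p τ l₀ k) (τ * GGaux F p τ l₀ (k + 1) s₀) s₀ := by
  have hr : 0 < ε - |s₀| := by linarith
  have hdiff : ∀ (u : ℝ) (s : ℝ),
      HasDerivAt (fun s' : ℝ => u ^ k * iteratedDeriv k p (l₀ + τ * s' * u))
        (τ * (u ^ (k + 1) * iteratedDeriv (k + 1) p (l₀ + τ * s * u))) s := by
    intro u s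
    have hin : HasDerivAt (fun s' : ℝ => l₀ + τ * s' * u) (τ * u) s := by
      simpa using (((hasDerivAt_id s).const_mul τ).mul_const u).const_add l₀
    have hout : HasDerivAt (iteratedDeriv k p)
        (iteratedDeriv (k + 1) p (l₀ + τ * s * u)) (l₀ + τ * s * u) := by
      have hd := (hsmooth.differentiable_iteratedDeriv k (by exact_mod_cast hk))
        (l₀ + τ * s * u)
      simpa [iteratedDeriv_succ] using hd.hasDerivAt
    have := (hout.comp s hin).const_mul (u ^ k)
    exact this.congr_deriv (by ring)
  have key := hasDerivAt_integral_of_dominated_loc_of_deriv_le (μ := F)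
      (F := fun s u => u ^ k * iteratedDeriv k p (l₀ + τ * s * u))
      (F' := fun s u => τ * (u ^ (k + 1) * iteratedDeriv (k + 1) p (l₀ + τ * s * u)))
      (bound := fun u => τ * D u) (Metric.ball_mem_nhds s₀ hr)
      (Eventually.of_forall fun s => GGaux_meas F p τ l₀ hsmooth k hk.le s)
      (GGaux_int F p τ l₀ hsmooth D hD ε hdom k hk.le s₀ hs₀)
      ((GGaux_meas F p τ l₀ hsmooth (k + 1) (by omega) s₀).const_mul τ)
      ?_ (hD.const_mul τ)
      (Eventually.of_forall fun u s _ => hdiff u s)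
  · have h2 := key.2
    have : (∫ u, τ * (u ^ (k + 1) * iteratedDeriv (k + 1) p (l₀ + τ * s₀ * u)) ∂F)
        = τ * GGaux F p τ l₀ (k + 1) s₀ := integral_const_mul _ _
    rw [this] at h2
    exact h2
  · filter_upwards [hdom] with u hu s hs
    have hsε : |s| < ε := by
      have := abs_sub_abs_le_abs_sub s s₀
      have hb : |s - s₀| < ε - |s₀| := by simpa [Real.dist_eq] using hs
      linarith
    have := hu s hsε (k + 1) (by omega)
    have hDnn : 0 ≤ D u := le_trans (abs_nonneg _) this
    calc ‖τ * (u ^ (k + 1) * iteratedDeriv (k + 1) p (l₀ + τ * s * u))‖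
        = τ * |u ^ (k + 1) * iteratedDeriv (k + 1) p (l₀ + τ * s * u)| := by
          rw [Real.norm_eq_abs, abs_mul, abs_of_pos hτ]
      _ ≤ τ * D u := by nlinarith

lemma GGaux_cont3 (F : Measure ℝ) (p : ℝ → ℝ) (τ l₀ : ℝ) (hsmooth : ContDiff ℝ 3 p)
    (D : ℝ → ℝ) (hD : Integrable D F) (ε : ℝ) (hε : 0 < ε)
    (hdom : ∀ᵐ u ∂F, ∀ ξ : ℝ, |ξ| < ε → ∀ k ≤ 3,
      |u ^ k * iteratedDeriv k p (l₀ + τ * ξ * u)| ≤ D u) :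
    ContinuousAt (GGaux F p τ l₀ 3) 0 := by
  refine continuousAt_of_dominated
    (Eventually.of_forall fun s => GGaux_meas F p τ l₀ hsmooth 3 le_rfl s) ?_ hD ?_
  · filter_upwards [Metric.ball_mem_nhds (0 : ℝ) hε] with s hs
    filter_upwards [hdom] with u hu
    have hsε : |s| < ε := by simpa [Real.dist_eq] using hs
    rw [Real.norm_eq_abs]
    exact hu s hsε 3 le_rfl
  · refine Eventually.of_forall fun u => ?_
    refine Continuous.continuousAt ?_
    exact continuous_const.mul
      ((hsmooth.continuous_iteratedDeriv 3 le_rfl).comp (by continuity))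

lemma GGaux_zero_val (F : Measure ℝ) [IsProbabilityMeasure F] (p : ℝ → ℝ) (τ l₀ : ℝ)
    (k : ℕ) :
    GGaux F p τ l₀ k 0 = (∫ u, u ^ k ∂F) * iteratedDeriv k p l₀ := by
  unfold GGaux
  simp only [mul_zero, zero_mul, add_zero]
  exact integral_mul_const _ _

open Set

lemma core_unbounded (τ : ℝ) (hτ : 0 < τ) (g0 g1 g2 g3 : ℝ → ℝ) (ε : ℝ) (hε : 0 < ε)
    (hg0d : ∀ s : ℝ, |s| < ε → HasDerivAt g0 (τ * g1 s) s)
    (hg1d : ∀ s : ℝ, |s| < ε → HasDerivAt g1 (τ * g2 s) s)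
    (hg2d : ∀ s : ℝ, |s| < ε → HasDerivAt g2 (τ * g3 s) s)
    (hg3c : ContinuousAt g3 0)
    (hg10 : g1 0 = 0) (hg30 : g3 0 ≠ 0)
    (hg0pos : ∀ s : ℝ, |s| < ε → 0 < g0 s)
    (L : ℝ → ℝ) (hL : ∀ η : ℝ, 0 < η → L η = Real.log (g0 (Real.sqrt η))) :
    Tendsto (fun η : ℝ => |deriv (deriv L) η|) (𝓝[>] (0 : ℝ)) atTop := by
  have h0ε : |(0:ℝ)| < ε := by simpa using hε
  have hε2 : (0:ℝ) < ε ^ 2 := by positivity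
  set H : ℝ → ℝ := fun η => τ * g1 (Real.sqrt η) / (2 * Real.sqrt η * g0 (Real.sqrt η))
    with hHdef
  set K : ℝ → ℝ := fun η =>
      (τ ^ 2 * Real.sqrt η * g2 (Real.sqrt η) * g0 (Real.sqrt η)
        - τ * g1 (Real.sqrt η) * g0 (Real.sqrt η)
        - τ ^ 2 * Real.sqrt η * (g1 (Real.sqrt η)) ^ 2)
      / (4 * η * (g0 (Real.sqrt η)) ^ 2 * Real.sqrt η) with hKdef
  -- basic facts about s = √η on Ioo 0 ε²
  have hsfacts : ∀ η ∈ Ioo (0:ℝ) (ε ^ 2),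
      0 < Real.sqrt η ∧ |Real.sqrt η| < ε ∧ 0 < g0 (Real.sqrt η) := by
    intro η hη
    have hs : 0 < Real.sqrt η := Real.sqrt_pos.2 hη.1
    have hlt : Real.sqrt η < ε := (Real.sqrt_lt' hε).2 hη.2
    have habs : |Real.sqrt η| < ε := by rwa [abs_of_pos hs]
    exact ⟨hs, habs, hg0pos _ habs⟩
  -- first derivative of L
  have hLd : ∀ η ∈ Ioo (0:ℝ) (ε ^ 2), HasDerivAt L (H η) η := by
    intro η hη
    obtain ⟨hs, habs, hg0s⟩ := hsfacts η hη
    have hsq : HasDerivAt Real.sqrt (1 / (2 * Real.sqrt η)) η :=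
      Real.hasDerivAt_sqrt hη.1.ne'
    have hcomp : HasDerivAt (fun η' => g0 (Real.sqrt η'))
        (τ * g1 (Real.sqrt η) * (1 / (2 * Real.sqrt η))) η :=
      (hg0d _ habs).comp η hsq
    have hlog := hcomp.log hg0s.ne'
    have hev : (fun η' => Real.log (g0 (Real.sqrt η'))) =ᶠ[𝓝 η] L := by
      filter_upwards [Ioi_mem_nhds hη.1] with x hx
      exact (hL x hx).symm
    have hfinal := hlog.congr_of_eventuallyEq hev.symm
    refine hfinal.congr_deriv ?_
    rw [hHdef]
    field_simp
  have hderivL : ∀ η ∈ Ioo (0:ℝ) (ε ^ 2), deriv L η = H η := fun η hη => (hLd η hη).deriv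
  -- second derivative
  have hKd : ∀ η ∈ Ioo (0:ℝ) (ε ^ 2), HasDerivAt H (K η) η := by
    intro η hη
    obtain ⟨hs, habs, hg0s⟩ := hsfacts η hη
    have hss : Real.sqrt η * Real.sqrt η = η := Real.mul_self_sqrt hη.1.le
    have hsq : HasDerivAt Real.sqrt (1 / (2 * Real.sqrt η)) η :=
      Real.hasDerivAt_sqrt hη.1.ne'
    have hnum : HasDerivAt (fun η' => τ * g1 (Real.sqrt η'))
        (τ * (τ * g2 (Real.sqrt η) * (1 / (2 * Real.sqrt η)))) η :=
      (((hg1d _ habs).comp η hsq)).const_mul τ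
    have h1 : HasDerivAt (fun η' : ℝ => 2 * Real.sqrt η') (2 * (1 / (2 * Real.sqrt η))) η :=
      hsq.const_mul 2
    have h2 : HasDerivAt (fun η' => g0 (Real.sqrt η'))
        (τ * g1 (Real.sqrt η) * (1 / (2 * Real.sqrt η))) η :=
      (hg0d _ habs).comp η hsq
    have hden := h1.mul h2
    have hdenne : 2 * Real.sqrt η * g0 (Real.sqrt η) ≠ 0 := by positivity
    have hdiv := hnum.div hden hdenne
    refine hdiv.congr_deriv ?_
    rw [hKdef]
    rw [show η = Real.sqrt η * Real.sqrt η from hss.symm]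
    simp only [Pi.mul_apply, Real.sqrt_mul_self hs.le]
    field_simp
    ring
  have hderiv2 : ∀ η ∈ Ioo (0:ℝ) (ε ^ 2), deriv (deriv L) η = K η := by
    intro η hη
    have hEq : deriv L =ᶠ[𝓝 η] H :=
      Filter.eventuallyEq_of_mem (isOpen_Ioo.mem_nhds hη) hderivL
    rw [hEq.deriv_eq, (hKd η hη).deriv]
  -- limits
  have hsqrt_tendsto : Tendsto Real.sqrt (𝓝[>] (0:ℝ)) (𝓝[>] (0:ℝ)) := by
    apply tendsto_nhdsWithin_of_tendsto_nhds_of_eventually_within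
    · have h := (Real.continuous_sqrt.tendsto 0).mono_left (nhdsWithin_le_nhds (s := Ioi 0))
      simpa using h
    · filter_upwards [self_mem_nhdsWithin] with x hx
      exact Real.sqrt_pos.2 hx
  have hg3lim : Tendsto g3 (𝓝[>] (0:ℝ)) (𝓝 (g3 0)) :=
    hg3c.tendsto.mono_left nhdsWithin_le_nhds
  have hψ : Tendsto (fun s => (τ * s * g2 s - g1 s) / s ^ 2) (𝓝[>] (0:ℝ))
      (𝓝 (τ ^ 2 * g3 0 / 2)) := by
    apply HasDerivAt.lhopital_zero_right_on_Ioo (a := 0) (b := ε) hε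
      (f' := fun s => τ ^ 2 * s * g3 s) (g' := fun s => 2 * s)
    · intro x hx
      have hxa : |x| < ε := by rw [abs_of_pos hx.1]; exact hx.2
      have ha : HasDerivAt (fun s : ℝ => τ * s) τ x := by
        simpa using (hasDerivAt_id x).const_mul τ
      have hb := (ha.mul (hg2d x hxa)).sub (hg1d x hxa)
      exact hb.congr_deriv (by ring)
    · intro x hx
      simpa using hasDerivAt_pow 2 x
    · intro x hx
      exact mul_ne_zero two_ne_zero (ne_of_gt hx.1)
    · have c2 := (hg2d 0 h0ε).continuousAt
      have c1 := (hg1d 0 h0ε).continuousAt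
      have cont : ContinuousAt (fun s => τ * s * g2 s - g1 s) 0 :=
        ((continuousAt_const.mul continuousAt_id).mul c2).sub c1
      have := cont.tendsto.mono_left (nhdsWithin_le_nhds (s := Ioi 0))
      simpa [hg10] using this
    · have : Tendsto (fun s : ℝ => s ^ 2) (𝓝 0) (𝓝 0) := by
        simpa using (continuous_pow 2).tendsto (0:ℝ)
      exact this.mono_left nhdsWithin_le_nhds
    · have base : Tendsto (fun s => τ ^ 2 * g3 s / 2) (𝓝[>] (0:ℝ)) (𝓝 (τ ^ 2 * g3 0 / 2)) :=
        (tendsto_const_nhds.mul hg3lim).div_const 2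
      refine base.congr' ?_
      filter_upwards [self_mem_nhdsWithin] with x hx
      have hx0 : x ≠ 0 := ne_of_gt hx
      field_simp
  have hslope : Tendsto (fun s => g1 s / s) (𝓝[>] (0:ℝ)) (𝓝 (τ * g2 0)) := by
    have h := hasDerivAt_iff_tendsto_slope.1 (hg1d 0 h0ε)
    have h' := h.mono_left (nhdsWithin_mono 0 (fun x (hx : x ∈ Ioi 0) => (ne_of_gt hx : x ≠ 0)))
    refine h'.congr fun s => ?_
    simp [slope_def_field, hg10]
  have hg0lim : Tendsto g0 (𝓝[>] (0:ℝ)) (𝓝 (g0 0)) :=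
    (hg0d 0 h0ε).continuousAt.tendsto.mono_left nhdsWithin_le_nhds
  have hid : Tendsto (fun s : ℝ => s) (𝓝[>] (0:ℝ)) (𝓝 0) := by
    have := (continuous_id.tendsto (0:ℝ)).mono_left (nhdsWithin_le_nhds (s := Ioi 0))
    exact this
  have hg00 : 0 < g0 0 := hg0pos 0 h0ε
  set c : ℝ := (τ * (τ ^ 2 * g3 0 / 2) * g0 0 - τ ^ 2 * (τ * g2 0) ^ 2 * 0) / (4 * (g0 0) ^ 2)
    with hcdef
  have hc : c ≠ 0 := by
    rw [hcdef]
    apply div_ne_zero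
    · simp only [mul_zero, sub_zero]
      exact mul_ne_zero (mul_ne_zero hτ.ne'
        (div_ne_zero (mul_ne_zero (pow_ne_zero _ hτ.ne') hg30) two_ne_zero)) hg00.ne'
    · positivity
  set M : ℝ → ℝ := fun s =>
      (τ * ((τ * s * g2 s - g1 s) / s ^ 2) * g0 s - τ ^ 2 * (g1 s / s) ^ 2 * s)
      / (4 * (g0 s) ^ 2) with hMdef
  have hM : Tendsto M (𝓝[>] (0:ℝ)) (𝓝 c) := by
    rw [hcdef, hMdef]
    exact (((tendsto_const_nhds.mul hψ).mul hg0lim).sub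
      ((tendsto_const_nhds.mul (hslope.pow 2)).mul hid)).div
      (tendsto_const_nhds.mul (hg0lim.pow 2)) (by positivity)
  have hKM : ∀ η ∈ Ioo (0:ℝ) (ε ^ 2), M (Real.sqrt η) = Real.sqrt η * K η := by
    intro η hη
    obtain ⟨hs, habs, hg0s⟩ := hsfacts η hη
    have hss : Real.sqrt η * Real.sqrt η = η := Real.mul_self_sqrt hη.1.le
    rw [hMdef, hKdef]
    simp only
    rw [show η = Real.sqrt η * Real.sqrt η from hss.symm]
    field_simp
    simp only [Real.sqrt_sq hs.le]
  have hmemIoo : Ioo (0:ℝ) (ε ^ 2) ∈ 𝓝[>] (0:ℝ) := Ioo_mem_nhdsGT hε2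
  have hprod : Tendsto (fun η => Real.sqrt η * K η) (𝓝[>] (0:ℝ)) (𝓝 c) := by
    have hcomp := hM.comp hsqrt_tendsto
    refine hcomp.congr' ?_
    filter_upwards [hmemIoo] with η hη
    exact hKM η hη
  have habsT : Tendsto (fun η => |Real.sqrt η * K η|) (𝓝[>] (0:ℝ)) (𝓝 |c|) := hprod.abs
  have hinv : Tendsto (fun η : ℝ => (Real.sqrt η)⁻¹) (𝓝[>] (0:ℝ)) atTop :=
    tendsto_inv_nhdsGT_zero.comp hsqrt_tendsto
  have hmul := Filter.Tendsto.pos_mul_atTop (abs_pos.2 hc) habsT hinv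
  refine hmul.congr' ?_
  filter_upwards [hmemIoo] with η hη
  obtain ⟨hs, habs2, hg0s⟩ := hsfacts η hη
  rw [hderiv2 η hη]
  rw [abs_mul, abs_of_pos hs]
  field_simp

/-- For the reparameterized mixture log-density
`l(η) = log ∫ p(y; l₀ + τ√η u) dF(u)`, `η > 0`, with `E[U] = 0` and `E[U²] = 1`, if
`∫ u³ dF ≠ 0` and `∇³_λ p(y; l₀) ≠ 0`, then the second derivative `l″(η)` diverges as
`η → 0⁺`: `|∇²_η l(η)| → ∞`. -/
theorem reparameterized_second_derivative_unbounded
    (F : Measure ℝ) [IsProbabilityMeasure F]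
    (hU1 : ∫ u, u ∂F = 0) (hU2 : ∫ u, u ^ 2 ∂F = 1)
    (hU3int : Integrable (fun u => u ^ 3) F) (hU3 : ∫ u, u ^ 3 ∂F ≠ 0)
    (τ : ℝ) (hτ : 0 < τ) (l₀ : ℝ)
    (p : ℝ → ℝ)
    (hsmooth : ContDiff ℝ 3 p)
    (hp3 : iteratedDeriv 3 p l₀ ≠ 0)
    -- domination justifying differentiation under the integral sign
    (D : ℝ → ℝ) (hD : Integrable D F) (ε : ℝ) (hε : 0 < ε)
    (hdom : ∀ᵐ u ∂F, ∀ ξ : ℝ, |ξ| < ε → ∀ k ≤ 3,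
      |u ^ k * iteratedDeriv k p (l₀ + τ * ξ * u)| ≤ D u)
    (hpos : 0 < p l₀) :
    Tendsto
      (fun η : ℝ =>
        |deriv (deriv fun η' : ℝ => Real.log (∫ u, p (l₀ + τ * Real.sqrt η' * u) ∂F)) η|)
      (𝓝[>] (0 : ℝ)) atTop := by
  have h0ε : |(0:ℝ)| < ε := by simpa using hε
  -- values at 0
  have hg00 : GGaux F p τ l₀ 0 0 = p l₀ := by
    rw [GGaux_zero_val]
    simp
  have hg10 : GGaux F p τ l₀ 1 0 = 0 := by
    rw [GGaux_zero_val, show (∫ u, u ^ 1 ∂F) = ∫ u, u ∂F by simp, hU1, zero_mul]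
  have hg30 : GGaux F p τ l₀ 3 0 ≠ 0 := by
    rw [GGaux_zero_val]
    exact mul_ne_zero hU3 hp3
  -- positivity of g0 near 0
  have hg0c : ContinuousAt (GGaux F p τ l₀ 0) 0 :=
    (GGaux_hasDerivAt F p τ l₀ hτ hsmooth D hD ε hdom 0 (by norm_num) 0 h0ε).continuousAt
  have hev : ∀ᶠ s in 𝓝 (0:ℝ), 0 < GGaux F p τ l₀ 0 s :=
    hg0c.tendsto.eventually (eventually_gt_nhds (by rwa [hg00]))
  obtain ⟨δ₀, hδ₀pos, hδ₀⟩ := Metric.eventually_nhds_iff.1 hev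
  set δ : ℝ := min δ₀ ε with hδdef
  have hδpos : 0 < δ := lt_min hδ₀pos hε
  have hδε : δ ≤ ε := min_le_right _ _
  -- apply core lemma
  refine core_unbounded τ hτ (GGaux F p τ l₀ 0) (GGaux F p τ l₀ 1) (GGaux F p τ l₀ 2)
    (GGaux F p τ l₀ 3) δ hδpos ?_ ?_ ?_
    (GGaux_cont3 F p τ l₀ hsmooth D hD ε hε hdom) hg10 hg30 ?_ _ ?_
  · exact fun s hs => GGaux_hasDerivAt F p τ l₀ hτ hsmooth D hD ε hdom 0 (by norm_num) s
      (lt_of_lt_of_le hs hδε)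
  · exact fun s hs => GGaux_hasDerivAt F p τ l₀ hτ hsmooth D hD ε hdom 1 (by norm_num) s
      (lt_of_lt_of_le hs hδε)
  · exact fun s hs => GGaux_hasDerivAt F p τ l₀ hτ hsmooth D hD ε hdom 2 (by norm_num) s
      (lt_of_lt_of_le hs hδε)
  · intro s hs
    apply hδ₀
    rw [Real.dist_eq, sub_zero]
    exact lt_of_lt_of_le hs (min_le_left _ _)
  · intro η hη
    congr 1
    simp [GGaux]
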